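/- arXiv:2311.07110 — 2 statements merged into one kernel-verified Lean document; each statement's English description precedes it below -/
import Mathlib

section
/- Suppose the noise-estimator perturbation satisfies ε_θ(x_t + Δx_t, t) - ε_θ(x_t, t) = Δx_t/√(1-ᾱ_t) + γ with ‖γ‖₂ ≤ C_t‖Δx_t‖₂, where C_t = (1 - √(1-ᾱ_{t-1})/√(1-ᾱ_t))/C_{ε_t} and C_{ε_t} = 1/√(ᾱ_t) - √(1-ᾱ_{t-1})/√(1-ᾱ_t). Then under the deterministic DDIM backward step x_{t-1} = (x_t - √(1-ᾱ_t) ε_θ(x_t,t))/√(ᾱ_t) + √(1-ᾱ_{t-1}) ε_θ(x_t,t), the difference satisfies ‖x'_{t-1} - x_{t-1}‖₂ ≤ ‖x'_t - x_t‖₂. -/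
/-- One DDIM backward step is non-expansive given the noise-estimator decomposition. -/
theorem ddim_backward_step_nonexpansive
    (n : ℕ) (xt xt' γ : EuclideanSpace ℝ (Fin n))
    (a b : ℝ) (h0 : 0 < a) (hab : a < b) (hb1 : b < 1)
    (εθ : EuclideanSpace ℝ (Fin n) → ℕ → EuclideanSpace ℝ (Fin n)) (t : ℕ)
    (hdecomp : εθ xt' t - εθ xt t
        = (Real.sqrt (1 - a))⁻¹ • (xt' - xt) + γ)
    (hγ : ‖γ‖ ≤ ((1 - Real.sqrt (1 - b) / Real.sqrt (1 - a)) *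
        (1 / Real.sqrt a - Real.sqrt (1 - b) / Real.sqrt (1 - a))⁻¹) * ‖xt' - xt‖)
    (xtm1 xtm1' : EuclideanSpace ℝ (Fin n))
    (hstep : xtm1 = (Real.sqrt a)⁻¹ • (xt - Real.sqrt (1 - a) • εθ xt t)
        + Real.sqrt (1 - b) • εθ xt t)
    (hstep' : xtm1' = (Real.sqrt a)⁻¹ • (xt' - Real.sqrt (1 - a) • εθ xt' t)
        + Real.sqrt (1 - b) • εθ xt' t) :
    ‖xtm1' - xtm1‖ ≤ ‖xt' - xt‖ := by
  have ha1 : a < 1 := hab.trans hb1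
  set sa := Real.sqrt a with hsadef
  set s := Real.sqrt (1 - a) with hsdef
  set sb := Real.sqrt (1 - b) with hsbdef
  have hsa0 : 0 < sa := Real.sqrt_pos.mpr h0
  have hsa1 : sa < 1 := by
    nlinarith [Real.sq_sqrt h0.le, Real.sqrt_nonneg a]
  have hs0 : 0 < s := Real.sqrt_pos.mpr (by linarith)
  have hs1 : s < 1 := by
    nlinarith [Real.sq_sqrt (show (0:ℝ) ≤ 1 - a by linarith), Real.sqrt_nonneg (1 - a)]
  have hsb0 : 0 ≤ sb := Real.sqrt_nonneg _
  have hsbs : sb < s := Real.sqrt_lt_sqrt (by linarith) (by linarith)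
  have hK : 0 < 1 / sa - sb / s := by
    have h1 : sb / s < 1 := (div_lt_one hs0).mpr hsbs
    have h2 : 1 < 1 / sa := by rw [lt_div_iff₀ hsa0]; linarith
    linarith
  have hε : εθ xt' t = (s⁻¹ • (xt' - xt) + γ) + εθ xt t := by
    rw [← hdecomp]; abel
  have hdiff : xtm1' - xtm1 = (sb / s) • (xt' - xt) + (sb - s / sa) • γ := by
    subst hstep hstep'
    rw [hε]
    match_scalars <;> field_simp <;> ring
  have hnorm : ‖xtm1' - xtm1‖ ≤ (sb / s) * ‖xt' - xt‖ + (s / sa - sb) * ‖γ‖ := by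
    rw [hdiff]
    refine (norm_add_le _ _).trans_eq ?_
    rw [norm_smul, norm_smul, Real.norm_eq_abs, Real.norm_eq_abs]
    have h1 : s < s / sa := by
      rw [lt_div_iff₀ hsa0]; nlinarith
    rw [abs_of_nonneg (by positivity : (0:ℝ) ≤ sb / s),
      abs_sub_comm, abs_of_nonneg (by linarith : (0:ℝ) ≤ s / sa - sb)]
  have hγ' : (s / sa - sb) * ‖γ‖ ≤ (s - sb) * ‖xt' - xt‖ := by
    have h1 : s < s / sa := by rw [lt_div_iff₀ hsa0]; nlinarith
    have e1 : s / sa - sb = s * (1 / sa - sb / s) := by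
      field_simp
    have h2 : (s / sa - sb) * ((1 - sb / s) *
        (1 / sa - sb / s)⁻¹) = s - sb := by
      rw [e1]
      calc s * (1 / sa - sb / s) * ((1 - sb / s) * (1 / sa - sb / s)⁻¹)
          = s * (1 - sb / s) * ((1 / sa - sb / s) * (1 / sa - sb / s)⁻¹) := by ring
        _ = s * (1 - sb / s) := by rw [mul_inv_cancel₀ hK.ne', mul_one]
        _ = s - sb := by field_simp
    calc (s / sa - sb) * ‖γ‖
        ≤ (s / sa - sb) * (((1 - sb / s) * (1 / sa - sb / s)⁻¹) * ‖xt' - xt‖) :=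
          mul_le_mul_of_nonneg_left hγ (by linarith)
      _ = (s - sb) * ‖xt' - xt‖ := by rw [← mul_assoc, h2]
  have hsum : sb / s * ‖xt' - xt‖ + (s - sb) * ‖xt' - xt‖ ≤ ‖xt' - xt‖ := by
    have hr : sb / s ≤ 1 := ((div_lt_one hs0).mpr hsbs).le
    have hr2 : sb / s * s = sb := div_mul_cancel₀ _ hs0.ne'
    have h3 : sb / s - sb ≤ 1 - s := by
      have h4 := mul_le_mul_of_nonneg_right hr (show (0:ℝ) ≤ 1 - s by linarith)
      rw [one_mul, mul_sub, mul_one, hr2] at h4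
      linarith
    have hcoef : sb / s + (s - sb) ≤ 1 := by linarith
    calc sb / s * ‖xt' - xt‖ + (s - sb) * ‖xt' - xt‖
        = (sb / s + (s - sb)) * ‖xt' - xt‖ := by ring
      _ ≤ 1 * ‖xt' - xt‖ := mul_le_mul_of_nonneg_right hcoef (norm_nonneg _)
      _ = ‖xt' - xt‖ := one_mul _
  linarith
end

section
/- Combining the previous facts: if at every backward step t (from T* down to 1) the noise estimator perturbation decomposes as ε_θ(x'_t,t) - ε_θ(x_t,t) = (x'_t - x_t)/√(1-ᾱ_t) + γ_t with ‖γ_t‖₂ ≤ C_t‖x'_t - x_t‖₂, then by induction ‖x'_0 - x_0‖₂ ≤ ‖x'_{T*} - x_{T*}‖₂; i.e., the full backward process is non-expansive with respect to the L₂ distance between the original and compromised trajectories. -/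
lemma step_aux {E : Type*} [NormedAddCommGroup E] [NormedSpace ℝ E]
    (s p q : ℝ) (d g e e' : E)
    (hq0 : 0 < q) (hq1 : q < 1) (hs0 : 0 < s) (hs1 : s < 1)
    (hp0 : 0 < p) (hps : p < s)
    (hε : e' - e = s⁻¹ • d + g)
    (hg : ‖g‖ ≤ (1 - p / s) * (1 / q - p / s)⁻¹ * ‖d‖) :
    ‖q⁻¹ • (d - s • (e' - e)) + p • (e' - e)‖ ≤ ‖d‖ := by
  have hsne : s ≠ 0 := ne_of_gt hs0
  have hqne : q ≠ 0 := ne_of_gt hq0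
  have ha1 : 1 < q⁻¹ := (one_lt_inv₀ hq0).mpr hq1
  have hasp : p < q⁻¹ * s := by nlinarith
  have hne2 : q⁻¹ * s - p ≠ 0 := ne_of_gt (by linarith)
  have heq : q⁻¹ • (d - s • (e' - e)) + p • (e' - e)
      = (p / s) • d + (p - q⁻¹ * s) • g := by
    rw [hε]
    match_scalars <;> (field_simp; try ring)
  rw [heq]
  have hC : (1 - p / s) * (1 / q - p / s)⁻¹ = (1 - p / s) * s / (q⁻¹ * s - p) := by
    rw [show 1 / q - p / s = (q⁻¹ * s - p) / s by field_simp, inv_div]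
    ring
  rw [hC] at hg
  have hd : ‖(p / s) • d + (p - q⁻¹ * s) • g‖
      ≤ (p / s) * ‖d‖ + (q⁻¹ * s - p) * ‖g‖ := by
    calc ‖(p / s) • d + (p - q⁻¹ * s) • g‖
        ≤ ‖(p / s) • d‖ + ‖(p - q⁻¹ * s) • g‖ := norm_add_le _ _
      _ = (p / s) * ‖d‖ + (q⁻¹ * s - p) * ‖g‖ := by
          rw [norm_smul, norm_smul, Real.norm_eq_abs, Real.norm_eq_abs,
            abs_of_pos (by positivity), abs_of_neg (by linarith)]
          ring
  have h2' : (q⁻¹ * s - p) * ‖g‖ ≤ (s - p) * ‖d‖ := by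
    have := mul_le_mul_of_nonneg_left hg (le_of_lt (by linarith : (0:ℝ) < q⁻¹ * s - p))
    calc (q⁻¹ * s - p) * ‖g‖
        ≤ (q⁻¹ * s - p) * ((1 - p / s) * s / (q⁻¹ * s - p) * ‖d‖) := this
      _ = (1 - p / s) * s * ‖d‖ := by
          rw [← mul_assoc, mul_div_assoc', mul_div_cancel_left₀ _ hne2]
      _ = (s - p) * ‖d‖ := by
          rw [show (1 - p / s) * s = s - p by field_simp]
  have hdn : (0:ℝ) ≤ ‖d‖ := norm_nonneg _
  have hc : p / s + (s - p) ≤ 1 := by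
    rw [div_add' _ _ _ hsne, div_le_one hs0]
    nlinarith
  calc ‖(p / s) • d + (p - q⁻¹ * s) • g‖
      ≤ (p / s) * ‖d‖ + (q⁻¹ * s - p) * ‖g‖ := hd
    _ ≤ (p / s) * ‖d‖ + (s - p) * ‖d‖ := by linarith
    _ ≤ ‖d‖ := by nlinarith

/-- The full backward process is non-expansive in L2 distance. -/
theorem backward_process_nonexpansive
    (n T : ℕ) (x x' : ℕ → EuclideanSpace ℝ (Fin n))
    (ᾱ : ℕ → ℝ) (γ : ℕ → EuclideanSpace ℝ (Fin n))
    (εθ : EuclideanSpace ℝ (Fin n) → ℕ → EuclideanSpace ℝ (Fin n))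
    (hᾱ : ∀ t, 1 ≤ t → t ≤ T → 0 < ᾱ t ∧ ᾱ t < ᾱ (t - 1) ∧ ᾱ (t - 1) < 1)
    (hstep : ∀ t, 1 ≤ t → t ≤ T →
      x (t - 1) = (Real.sqrt (ᾱ t))⁻¹ • (x t - Real.sqrt (1 - ᾱ t) • εθ (x t) t)
        + Real.sqrt (1 - ᾱ (t - 1)) • εθ (x t) t)
    (hstep' : ∀ t, 1 ≤ t → t ≤ T →
      x' (t - 1) = (Real.sqrt (ᾱ t))⁻¹ • (x' t - Real.sqrt (1 - ᾱ t) • εθ (x' t) t)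
        + Real.sqrt (1 - ᾱ (t - 1)) • εθ (x' t) t)
    (hdecomp : ∀ t, 1 ≤ t → t ≤ T →
      εθ (x' t) t - εθ (x t) t = (Real.sqrt (1 - ᾱ t))⁻¹ • (x' t - x t) + γ t)
    (hγ : ∀ t, 1 ≤ t → t ≤ T →
      ‖γ t‖ ≤ ((1 - Real.sqrt (1 - ᾱ (t - 1)) / Real.sqrt (1 - ᾱ t)) *
        (1 / Real.sqrt (ᾱ t) - Real.sqrt (1 - ᾱ (t - 1)) / Real.sqrt (1 - ᾱ t))⁻¹)
          * ‖x' t - x t‖) :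
    ‖x' 0 - x 0‖ ≤ ‖x' T - x T‖ := by
  have key : ∀ t, 1 ≤ t → t ≤ T → ‖x' (t - 1) - x (t - 1)‖ ≤ ‖x' t - x t‖ := by
    intro t h1 h2
    obtain ⟨hα0, hα1, hα2⟩ := hᾱ t h1 h2
    have hq0 : 0 < Real.sqrt (ᾱ t) := Real.sqrt_pos.mpr hα0
    have hq1 : Real.sqrt (ᾱ t) < 1 := by
      have h := Real.sqrt_lt_sqrt (le_of_lt hα0) (show ᾱ t < 1 by linarith)
      rwa [Real.sqrt_one] at h
    have hs0 : 0 < Real.sqrt (1 - ᾱ t) := Real.sqrt_pos.mpr (by linarith)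
    have hs1 : Real.sqrt (1 - ᾱ t) < 1 := by
      have h := Real.sqrt_lt_sqrt (show (0:ℝ) ≤ 1 - ᾱ t by linarith)
        (show 1 - ᾱ t < 1 by linarith)
      rwa [Real.sqrt_one] at h
    have hp0 : 0 < Real.sqrt (1 - ᾱ (t - 1)) := Real.sqrt_pos.mpr (by linarith)
    have hps : Real.sqrt (1 - ᾱ (t - 1)) < Real.sqrt (1 - ᾱ t) :=
      Real.sqrt_lt_sqrt (by linarith) (by linarith)
    have hdiff : x' (t - 1) - x (t - 1)
        = (Real.sqrt (ᾱ t))⁻¹ • ((x' t - x t)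
            - Real.sqrt (1 - ᾱ t) • (εθ (x' t) t - εθ (x t) t))
          + Real.sqrt (1 - ᾱ (t - 1)) • (εθ (x' t) t - εθ (x t) t) := by
      rw [hstep t h1 h2, hstep' t h1 h2]
      module
    rw [hdiff]
    exact step_aux _ _ _ _ _ _ _ hq0 hq1 hs0 hs1 hp0 hps
      (hdecomp t h1 h2) (hγ t h1 h2)
  have main : ∀ m, m ≤ T → ‖x' (T - m) - x (T - m)‖ ≤ ‖x' T - x T‖ := by
    intro m
    induction m with
    | zero => simp
    | succ k ih =>
      intro hk
      have hk' : k ≤ T := Nat.le_of_succ_le hk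
      have ht1 : 1 ≤ T - k := by omega
      have ht2 : T - k ≤ T := Nat.sub_le _ _
      have : T - (k + 1) = (T - k) - 1 := by omega
      rw [this]
      exact le_trans (key (T - k) ht1 ht2) (ih hk')
  have := main T le_rfl
  simpa using this
end
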